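/- arXiv:math/0601634 — 3 statements merged into one kernel-verified Lean document; each statement's English description precedes it below -/
import Mathlib

section
/- The ratio of two last multipliers of a vector field A (with nowhere-vanishing denominator) is a first integral of A. -/
/-- The ratio of two last multipliers of `A` (nowhere-vanishing, hence
invertible, denominator) is a first integral of `A`. -/
theorem ratio_of_last_multipliers_is_first_integral
    (R : Type*) [CommRing R] [Algebra ℝ R]
    (A : Derivation ℝ R R) (divA : R)
    (m₁ m₂ : R) [Invertible m₂]
    (h₁ : A m₁ + m₁ * divA = 0)
    (h₂ : A m₂ + m₂ * divA = 0) :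
    A (m₁ * ⅟m₂) = 0 := by
  have hone : A (m₂ * ⅟m₂) = 0 := by rw [mul_invOf_self]; simp
  rw [Derivation.leibniz] at hone ⊢
  simp only [smul_eq_mul] at hone ⊢
  have hinv : A ⅟m₂ = divA * ⅟m₂ := by
    linear_combination ⅟m₂ * hone - ⅟m₂ * ⅟m₂ * h₂
      + (divA * ⅟m₂ - A ⅟m₂) * (invOf_mul_self m₂)
  rw [hinv]
  linear_combination ⅟m₂ * h₁
end

section
/- For a fixed smooth function m, the set of vector fields admitting m as a last multiplier is a Lie subalgebra of the Lie algebra of vector fields: if X(m) + m·div(X) = 0 and Y(m) + m·div(Y) = 0, then [X,Y](m) + m·div([X,Y]) = 0. -/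
/-- For fixed `m`, the set of vector fields admitting `m` as last
multiplier is a Lie subalgebra: if `X(m) + m·div(X) = 0` and `Y(m) + m·div(Y) = 0`
then `[X,Y](m) + m·div([X,Y]) = 0`, using `div([X,Y]) = X(div Y) - Y(div X)`. -/
theorem vector_fields_with_fixed_last_multiplier_lie_subalgebra
    (R : Type*) [CommRing R] [Algebra ℝ R]
    (div : Derivation ℝ R R → R)
    (hdivbr : ∀ X Y : Derivation ℝ R R, div ⁅X, Y⁆ = X (div Y) - Y (div X))
    (m : R) (X Y : Derivation ℝ R R)
    (hX : X m + m * div X = 0)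
    (hY : Y m + m * div Y = 0) :
    ⁅X, Y⁆ m + m * div ⁅X, Y⁆ = 0 := by
  have hXm : X m = -(m * div X) := eq_neg_of_add_eq_zero_left hX
  have hYm : Y m = -(m * div Y) := eq_neg_of_add_eq_zero_left hY
  rw [Derivation.commutator_apply, hdivbr, hXm, hYm, map_neg, map_neg,
    Derivation.leibniz, Derivation.leibniz, hXm, hYm]
  simp only [smul_eq_mul]
  ring
end

section
/- On a Riemannian manifold, if u is a last multiplier of ∇m and m is a last multiplier of ∇u, then u·m is a harmonic function; in particular, u is a last multiplier of its own gradient ∇u if and only if u² is harmonic. -/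
lemma two_mul_eq_zero {R : Type*} [CommRing R] [Algebra ℝ R] (x : R)
    (h : 2 * x = 0) : x = 0 := by
  have h2 : (algebraMap ℝ R (1/2)) * 2 = 1 := by
    rw [show (2 : R) = algebraMap ℝ R 2 from (map_ofNat (algebraMap ℝ R) 2).symm, ← map_mul]
    norm_num
  calc x = (algebraMap ℝ R (1/2) * 2) * x := by rw [h2, one_mul]
    _ = algebraMap ℝ R (1/2) * (2 * x) := by ring
    _ = 0 := by rw [h, mul_zero]

/-- On a Riemannian manifold, if `u` is a last multiplier of `∇m` and
`m` is a last multiplier of `∇u` (condition `m·Δu + ⟨∇u,∇m⟩ = 0`), then `u·m` is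
harmonic; in particular `u` is a last multiplier of `∇u` iff `u²` is harmonic.
Here `Δ` is the Laplacian and `G f g` models `⟨∇f,∇g⟩`, satisfying the identity
`⟨∇f,∇g⟩ = ½(Δ(fg) - fΔg - gΔf)`. -/
theorem last_multiplier_gradient_harmonic
    (R : Type*) [CommRing R] [Algebra ℝ R]
    (Δ : R →ₗ[ℝ] R)
    (G : R → R → R)
    (hG : ∀ f g : R, 2 * G f g = Δ (f * g) - f * Δ g - g * Δ f)
    (u m : R) :
    ((u * Δ m + G m u = 0 ∧ m * Δ u + G u m = 0) → Δ (u * m) = 0) ∧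
    (u * Δ u + G u u = 0 ↔ Δ (u ^ 2) = 0) := by
  constructor
  · rintro ⟨h1, h2⟩
    apply two_mul_eq_zero
    have e1 := hG m u
    have e2 := hG u m
    have e3 : Δ (m * u) = Δ (u * m) := by rw [mul_comm]
    linear_combination 2 * h1 + 2 * h2 - e1 - e2 - e3
  · have e := hG u u
    have esq : Δ (u ^ 2) = Δ (u * u) := by rw [sq]
    constructor
    · intro h
      rw [esq]
      linear_combination 2 * h - e
    · intro h
      apply two_mul_eq_zero
      rw [esq] at h
      linear_combination e + h
end
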